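/- Let f_{m,r,s}(x) = Σ_{n≥1} c_{n,m,r,s} x^n as a formal power series over the rationals, where c_{n,m,r,s} is the number of 210-avoiding ascent sequences of length n with exactly m ascents, largest letter r, and last letter s. Then (1−x)·f_{0,0,0} = x, and for all m ≥ 1 and 1 ≤ r ≤ m, (1−x)·f_{m,r,r} = x·Σ_{j=0}^{r} Σ_{i=0}^{j} f_{m−1,j,i} − x·f_{m−1,r,r}. -/

import Mathlib

/-- Number of ascents of a sequence of non-negative integers:
indices `j` with `x j < x (j+1)`. -/
def ascents (l : List ℕ) : ℕ :=
  ((l.zip l.tail).filter (fun p => p.1 < p.2)).length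

/-- `x` is an ascent sequence: it starts with 0 and each subsequent letter is at most
one more than the number of ascents of the preceding prefix. -/
def IsAscentSeq (x : List ℕ) : Prop :=
  (∀ h : 0 < x.length, x.get ⟨0, h⟩ = 0) ∧
  ∀ i : Fin x.length, 0 < (i : ℕ) → x.get i ≤ ascents (x.take (i : ℕ)) + 1

/-- `p` contains the pattern `t`: `p` has a subsequence order-isomorphic to `t`. -/
def Contains (p t : List ℕ) : Prop :=
  ∃ f : Fin t.length → Fin p.length, StrictMono f ∧
    ∀ i j : Fin t.length, t.get i < t.get j ↔ p.get (f i) < p.get (f j)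

/-- `p` avoids the pattern `t`. -/
def Avoids (p t : List ℕ) : Prop := ¬ Contains p t

/-- `cA n m r s` is the number of 210-avoiding ascent sequences of length `n` with
exactly `m` ascents, largest letter `r`, and last letter `s`. -/
noncomputable def cA (n m r s : ℕ) : ℕ :=
  {x : List ℕ | x.length = n ∧ IsAscentSeq x ∧ Avoids x [2, 1, 0] ∧
    ascents x = m ∧ x.foldr max 0 = r ∧ x.getLast? = some s}.ncard

/-- `fGF m r s = Σ_{n ≥ 1} cA n m r s * x^n`, the generating function of the numbers
`c_{n,m,r,s}` (note `cA 0 m r s = 0`, as the empty list has no last letter);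
any negative index yields `0`. -/
noncomputable def fGF (m r s : ℤ) : PowerSeries ℚ :=
  if 0 ≤ m ∧ 0 ≤ r ∧ 0 ≤ s then
    PowerSeries.mk (fun n => (cA n m.toNat r.toNat s.toNat : ℚ))
  else 0

open PowerSeries

@[simp] lemma ascents_nil : ascents [] = 0 := rfl
@[simp] lemma ascents_single (a : ℕ) : ascents [a] = 0 := rfl
lemma ascents_cons_cons (a b : ℕ) (t : List ℕ) :
    ascents (a::b::t) = (if a < b then 1 else 0) + ascents (b::t) := by
  simp only [ascents, List.tail_cons, List.zip_cons_cons, List.filter_cons]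
  by_cases h : a < b <;> simp [h, Nat.add_comm]

lemma ascents_concat (l : List ℕ) (hl : l ≠ []) (a : ℕ) :
    ascents (l ++ [a]) = ascents l + (if l.getLast?.getD 0 < a then 1 else 0) := by
  induction l with
  | nil => simp at hl
  | cons x t ih =>
    cases t with
    | nil => by_cases h : x < a <;> simp [ascents_cons_cons, h]
    | cons y s =>
      have ih' := ih (by simp)
      rw [show (x :: y :: s) ++ [a] = x :: ((y::s) ++ [a]) by simp] at *
      rw [show ((y::s) ++ [a]) = y :: (s ++ [a]) by simp] at *
      rw [ascents_cons_cons, ih', ascents_cons_cons x y s,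
        show (x :: y :: s).getLast? = (y::s).getLast? by simp [List.getLast?_cons_cons]]
      ring

lemma isAscentSeq_concat (l : List ℕ) (hl : l ≠ []) (a : ℕ) :
    IsAscentSeq (l ++ [a]) ↔ IsAscentSeq l ∧ a ≤ ascents l + 1 := by
  have hlen : (l ++ [a]).length = l.length + 1 := by simp
  have hpos : 0 < l.length := List.length_pos_iff.mpr hl
  constructor
  · rintro ⟨h0, hstep⟩
    refine ⟨⟨fun h => ?_, fun i hi => ?_⟩, ?_⟩
    · have := h0 (by simp [hlen])
      simpa [List.get_eq_getElem, List.getElem_append_left hpos] using this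
    · have hi' : (i : ℕ) < (l ++ [a]).length := by simp [hlen]
      have := hstep ⟨i, hi'⟩ hi
      simp only [List.get_eq_getElem] at this ⊢
      rw [List.getElem_append_left i.isLt] at this
      rwa [List.take_append_of_le_length (le_of_lt i.isLt)] at this
    · have hi' : l.length < (l ++ [a]).length := by simp
      have := hstep ⟨l.length, hi'⟩ hpos
      simp only [List.get_eq_getElem] at this
      rw [List.getElem_append_right (le_refl _)] at this
      simp at this
      exact this
  · rintro ⟨⟨h0, hstep⟩, ha⟩
    refine ⟨fun h => ?_, fun i hi => ?_⟩
    · have := h0 hpos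
      simpa [List.get_eq_getElem, List.getElem_append_left hpos] using this
    · rcases Nat.lt_or_ge (i : ℕ) l.length with hlt | hge
      · have := hstep ⟨i, hlt⟩ hi
        simp only [List.get_eq_getElem] at this ⊢
        rw [List.getElem_append_left hlt,
          List.take_append_of_le_length (le_of_lt hlt)]
        exact this
      · have heq : (i : ℕ) = l.length := by have := i.isLt; simp [hlen] at this; omega
        simp only [List.get_eq_getElem, heq]
        rw [List.getElem_append_right (le_refl _)]
        simp
        exact ha

lemma foldr_max_concat (l : List ℕ) (a : ℕ) :
    (l ++ [a]).foldr max 0 = max (l.foldr max 0) a := by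
  induction l with
  | nil => simp
  | cons x t ih => simp [ih]

lemma le_foldr_max (l : List ℕ) (x : ℕ) (hx : x ∈ l) : x ≤ l.foldr max 0 := by
  induction l with
  | nil => simp at hx
  | cons y t ih =>
    rcases List.mem_cons.mp hx with h | h
    · simp [h]
    · simp; right; exact ih h

lemma contains_210_iff (p : List ℕ) :
    Contains p [2,1,0] ↔ ∃ i j k : Fin p.length,
      i < j ∧ j < k ∧ p.get k < p.get j ∧ p.get j < p.get i := by
  constructor
  · rintro ⟨f, hmono, hiso⟩
    refine ⟨f ⟨0, by simp⟩, f ⟨1, by simp⟩, f ⟨2, by simp⟩, ?_, ?_, ?_, ?_⟩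
    · exact hmono (by simp [Fin.lt_def])
    · exact hmono (by simp [Fin.lt_def])
    · exact (hiso ⟨2, by simp⟩ ⟨1, by simp⟩).mp (by simp)
    · exact (hiso ⟨1, by simp⟩ ⟨0, by simp⟩).mp (by simp)
  · rintro ⟨i, j, k, hij, hjk, hkj, hji⟩
    refine ⟨fun n => if (n:ℕ) = 0 then i else if (n:ℕ) = 1 then j else k, ?_, ?_⟩
    · intro a b hab
      fin_cases a <;> fin_cases b <;>
        simp_all <;> first | exact hij.trans hjk | omega
    · intro a b
      have hki : p.get k < p.get i := hkj.trans hji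
      fin_cases a <;> fin_cases b <;> simp_all <;> omega


lemma avoids_concat_max (l : List ℕ) (a : ℕ) (hmax : ∀ x ∈ l, x ≤ a) :
    Avoids (l ++ [a]) [2,1,0] ↔ Avoids l [2,1,0] := by
  unfold Avoids
  rw [not_iff_not, contains_210_iff, contains_210_iff]
  constructor
  · rintro ⟨i, j, k, hij, hjk, h1, h2⟩
    simp only [List.get_eq_getElem] at h1 h2
    have hk : (k:ℕ) < l.length + 1 := by simpa using k.isLt
    rcases Nat.lt_or_ge (k:ℕ) l.length with hkl | hkl
    · have hjl : (j:ℕ) < l.length := lt_trans hjk hkl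
      have hil : (i:ℕ) < l.length := lt_trans hij hjl
      have ei : (l ++ [a])[(i:ℕ)]'(i.isLt) = l[(i:ℕ)] := List.getElem_append_left hil
      have ej : (l ++ [a])[(j:ℕ)]'(j.isLt) = l[(j:ℕ)] := List.getElem_append_left hjl
      have ek : (l ++ [a])[(k:ℕ)]'(k.isLt) = l[(k:ℕ)] := List.getElem_append_left hkl
      exact ⟨⟨i, hil⟩, ⟨j, hjl⟩, ⟨k, hkl⟩, hij, hjk,
        by simp only [List.get_eq_getElem]; rw [← ei, ← ej, ← ek] at *; exact ⟨h1, h2⟩⟩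
    · exfalso
      have hkeq : (k:ℕ) = l.length := by omega
      have hjl : (j:ℕ) < l.length := by have := hjk; omega
      have ek : (l ++ [a])[(k:ℕ)]'(k.isLt) = a := by
        simp [hkeq]
      have ej : (l ++ [a])[(j:ℕ)]'(j.isLt) = l[(j:ℕ)] := List.getElem_append_left hjl
      rw [ek, ej] at h1
      exact absurd (hmax _ (List.getElem_mem _)) (not_le.mpr h1)
  · rintro ⟨i, j, k, hij, hjk, h1, h2⟩
    simp only [List.get_eq_getElem] at h1 h2
    have hil : (i:ℕ) < (l ++ [a]).length := by simp
    have hjl : (j:ℕ) < (l ++ [a]).length := by simp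
    have hkl : (k:ℕ) < (l ++ [a]).length := by simp
    have ei : (l ++ [a])[(i:ℕ)]'hil = l[(i:ℕ)] := List.getElem_append_left i.isLt
    have ej : (l ++ [a])[(j:ℕ)]'hjl = l[(j:ℕ)] := List.getElem_append_left j.isLt
    have ek : (l ++ [a])[(k:ℕ)]'hkl = l[(k:ℕ)] := List.getElem_append_left k.isLt
    exact ⟨⟨i, hil⟩, ⟨j, hjl⟩, ⟨k, hkl⟩, hij, hjk,
      by simp only [List.get_eq_getElem]; rw [ei, ej, ek]; exact ⟨h1, h2⟩⟩

lemma finite_bounded (n r : ℕ) :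
    {l : List ℕ | l.length = n ∧ ∀ x ∈ l, x ≤ r}.Finite := by
  induction n with
  | zero =>
    apply Set.Finite.subset (Set.finite_singleton ([] : List ℕ))
    rintro l ⟨h, -⟩
    simp [List.length_eq_zero_iff.mp h]
  | succ n ih =>
    apply Set.Finite.subset (Set.Finite.image (fun p : ℕ × List ℕ => p.1 :: p.2)
      ((Set.finite_Icc 0 r).prod ih))
    rintro l ⟨h, hb⟩
    cases l with
    | nil => simp at h
    | cons x t =>
      exact ⟨(x, t), ⟨⟨Nat.zero_le _, hb x (by simp)⟩,
        by simpa using h, fun y hy => hb y (by simp [hy])⟩, rfl⟩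

lemma sum_ncard {α : Type*} (A : Set α) (hA : A.Finite) (φ : α → ℕ) (k : ℕ) :
    {x ∈ A | φ x ≤ k}.ncard = ∑ i ∈ Finset.range (k+1), {x ∈ A | φ x = i}.ncard := by
  induction k with
  | zero => simp [Nat.le_zero]
  | succ k ih =>
    have hsplit : {x ∈ A | φ x ≤ k + 1} = {x ∈ A | φ x ≤ k} ∪ {x ∈ A | φ x = k+1} := by
      ext x; by_cases h : x ∈ A <;> simp [h]; omega
    have hdisj : Disjoint {x ∈ A | φ x ≤ k} {x ∈ A | φ x = k+1} := by
      rw [Set.disjoint_left]; rintro x ⟨-, h1⟩ ⟨-, h2⟩; omega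
    have h1 : {x ∈ A | φ x ≤ k}.Finite := hA.subset (fun x hx => hx.1)
    have h2 : {x ∈ A | φ x = k+1}.Finite := hA.subset (fun x hx => hx.1)
    rw [Finset.sum_range_succ, ← ih, hsplit, Set.ncard_union_eq hdisj h1 h2]

lemma foldr_max_replicate (n : ℕ) : (List.replicate n 0).foldr max 0 = 0 := by
  induction n with
  | zero => rfl
  | succ n ih => simpa [List.replicate_succ] using ih

def AS (n m : ℕ) : Set (List ℕ) :=
  {x | x.length = n ∧ IsAscentSeq x ∧ Avoids x [2,1,0] ∧ ascents x = m}

lemma cA_eq (n m r s : ℕ) :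
    cA n m r s = {x ∈ AS n m | x.foldr max 0 = r ∧ x.getLast? = some s}.ncard := by
  unfold cA AS
  congr 1
  ext x
  simp only [Set.mem_setOf_eq, Set.mem_sep_iff]
  tauto

lemma AS_finite (n m r : ℕ) (P : List ℕ → Prop) :
    {x ∈ AS n m | x.foldr max 0 ≤ r ∧ P x}.Finite := by
  apply (finite_bounded n r).subset
  rintro x ⟨⟨hlen, -⟩, hmax, -⟩
  exact ⟨hlen, fun y hy => le_trans (le_foldr_max x y hy) hmax⟩

lemma getLast?_eq_getD (x : List ℕ) (hx : x ≠ []) :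
    x.getLast? = some (x.getLast?.getD 0) := by
  obtain ⟨a, ha⟩ := Option.isSome_iff_exists.mp (List.getLast?_isSome.mpr hx)
  simp [ha]

lemma lastD_le_max (x : List ℕ) (hx : x ≠ []) :
    x.getLast?.getD 0 ≤ x.foldr max 0 := by
  apply le_foldr_max
  rw [List.getLast?_eq_getLast hx]
  exact List.getLast_mem hx

-- step 2+3 combined
lemma key2 (n M R : ℕ) (hn : 1 ≤ n) :
    ∑ j ∈ Finset.range (R+1), ∑ i ∈ Finset.range (j+1), cA n M j i
      = {x ∈ AS n M | x.foldr max 0 ≤ R ∧ x.getLast?.getD 0 < R}.ncard + cA n M R R := by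
  have hne : ∀ x ∈ AS n M, x ≠ [] := by
    rintro x ⟨hlen, -⟩ rfl; simp at hlen; omega
  -- inner sum
  have inner : ∀ j, ∑ i ∈ Finset.range (j+1), cA n M j i
      = {x ∈ AS n M | x.foldr max 0 = j}.ncard := by
    intro j
    have hfin : {x ∈ AS n M | x.foldr max 0 = j}.Finite := by
      have := AS_finite n M j (fun x => x.foldr max 0 = j)
      apply this.subset
      rintro x ⟨h1, h2⟩; exact ⟨h1, le_of_eq h2, h2⟩
    rw [show ({x ∈ AS n M | x.foldr max 0 = j} : Set (List ℕ))
        = {x ∈ {x ∈ AS n M | x.foldr max 0 = j} | x.getLast?.getD 0 ≤ j} from ?_]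
    · rw [sum_ncard _ hfin]
      apply Finset.sum_congr rfl
      intro i _
      rw [cA_eq]
      congr 1
      ext x
      simp only [Set.mem_sep_iff, Set.mem_setOf_eq]
      constructor
      · rintro ⟨hx, hmax, hlast⟩
        refine ⟨⟨hx, hmax⟩, ?_⟩
        rw [hlast]; rfl
      · rintro ⟨⟨hx, hmax⟩, hlast⟩
        refine ⟨hx, hmax, ?_⟩
        rw [getLast?_eq_getD x (hne x hx), hlast]
    · ext x
      simp only [Set.mem_sep_iff, Set.mem_setOf_eq]
      constructor
      · rintro ⟨hx, hmax⟩
        exact ⟨⟨hx, hmax⟩, hmax ▸ lastD_le_max x (hne x hx)⟩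
      · rintro ⟨⟨hx, hmax⟩, -⟩; exact ⟨hx, hmax⟩
  calc ∑ j ∈ Finset.range (R+1), ∑ i ∈ Finset.range (j+1), cA n M j i
      = ∑ j ∈ Finset.range (R+1), {x ∈ AS n M | x.foldr max 0 = j}.ncard := by
        exact Finset.sum_congr rfl (fun j _ => inner j)
    _ = {x ∈ AS n M | x.foldr max 0 ≤ R}.ncard := by
        have hAfin : {x ∈ AS n M | x.foldr max 0 ≤ R}.Finite :=
          (AS_finite n M R (fun _ => True)).subset
            (by rintro x ⟨a, b⟩; exact ⟨a, b, trivial⟩)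
        rw [show ({x ∈ AS n M | x.foldr max 0 ≤ R} : Set (List ℕ))
            = {x ∈ {x ∈ AS n M | x.foldr max 0 ≤ R} | x.foldr max 0 ≤ R} from by
          ext x; simp only [Set.mem_sep_iff, Set.mem_setOf_eq]; tauto]
        rw [sum_ncard _ hAfin]
        apply Finset.sum_congr rfl
        intro j hj
        simp only [Finset.mem_range] at hj
        congr 1
        ext x
        exact ⟨fun h => ⟨⟨h.1, le_trans (le_of_eq h.2) (by omega : j ≤ R)⟩, h.2⟩,
          fun h => ⟨h.1.1, h.2⟩⟩
    _ = _ := by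
        have hsplit : ({x ∈ AS n M | x.foldr max 0 ≤ R} : Set (List ℕ))
            = {x ∈ AS n M | x.foldr max 0 ≤ R ∧ x.getLast?.getD 0 < R}
              ∪ {x ∈ AS n M | x.foldr max 0 = R ∧ x.getLast? = some R} := by
          ext x
          simp only [Set.mem_sep_iff, Set.mem_setOf_eq, Set.mem_union]
          constructor
          · rintro ⟨hx, hmax⟩
            have hlast := lastD_le_max x (hne x hx)
            rcases Nat.lt_or_ge (x.getLast?.getD 0) R with h | h
            · exact Or.inl ⟨hx, hmax, h⟩
            · have he : x.getLast?.getD 0 = R := by omega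
              have hm : x.foldr max 0 = R := by omega
              exact Or.inr ⟨hx, hm, by rw [getLast?_eq_getD x (hne x hx), he]⟩
          · rintro (⟨hx, hmax, -⟩ | ⟨hx, hmax, -⟩)
            · exact ⟨hx, hmax⟩
            · exact ⟨hx, le_of_eq hmax⟩
        have hdisj : Disjoint {x ∈ AS n M | x.foldr max 0 ≤ R ∧ x.getLast?.getD 0 < R}
            {x ∈ AS n M | x.foldr max 0 = R ∧ x.getLast? = some R} := by
          rw [Set.disjoint_left]
          rintro x ⟨-, -, h1⟩ ⟨-, -, h2⟩
          rw [h2] at h1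
          simp at h1
        have f1 := AS_finite n M R (fun x => x.getLast?.getD 0 < R)
        have f2 : {x ∈ AS n M | x.foldr max 0 = R ∧ x.getLast? = some R}.Finite := by
          apply (AS_finite n M R (fun x => x.getLast? = some R)).subset
          rintro x ⟨h1, h2, h3⟩; exact ⟨h1, le_of_eq h2, h3⟩
        rw [hsplit, Set.ncard_union_eq hdisj f1 f2, cA_eq]

lemma key1 (n M R : ℕ) (hn : 1 ≤ n) (hM : 1 ≤ M) (hR1 : 1 ≤ R) (hRM : R ≤ M) :
    cA (n+1) M R R = cA n M R R
      + {x ∈ AS n (M-1) | x.foldr max 0 ≤ R ∧ x.getLast?.getD 0 < R}.ncard := by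
  set D : Set (List ℕ) :=
    {x ∈ AS n (M-1) | x.foldr max 0 ≤ R ∧ x.getLast?.getD 0 < R} with hD
  set S : Set (List ℕ) :=
    {x ∈ AS n M | x.foldr max 0 = R ∧ x.getLast? = some R} with hS
  have himg : ({x ∈ AS (n+1) M | x.foldr max 0 = R ∧ x.getLast? = some R} : Set (List ℕ))
      = (fun l => l ++ [R]) '' (S ∪ D) := by
    ext x
    constructor
    · rintro ⟨⟨hlen, hasc, havd, hascn⟩, hmax, hlast⟩
      have hxne : x ≠ [] := by rintro rfl; simp at hlen
      have hgl : x.getLast hxne = R := by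
        have := List.getLast?_eq_getLast hxne
        rw [hlast] at this
        exact (Option.some_injective _ this.symm)
      have hxeq : x = x.dropLast ++ [R] := by
        conv_lhs => rw [← List.dropLast_append_getLast hxne]
        rw [hgl]
      set l := x.dropLast with hl
      have hlen' : l.length = n := by
        have : x.length = l.length + 1 := by rw [hxeq]; simp
        omega
      have hlne : l ≠ [] := by
        rintro h; rw [h] at hlen'; simp at hlen'; omega
      rw [hxeq] at hasc havd hascn hmax
      obtain ⟨hascl, hRle⟩ := (isAscentSeq_concat l hlne R).mp hasc
      have hbound : ∀ y ∈ l, y ≤ R := by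
        intro y hy
        have : y ≤ (l ++ [R]).foldr max 0 :=
          le_foldr_max _ y (by simp [hy])
        omega
      have havdl : Avoids l [2,1,0] := (avoids_concat_max l R hbound).mp havd
      rw [foldr_max_concat] at hmax
      have hmaxl : l.foldr max 0 ≤ R := by omega
      rw [ascents_concat l hlne R] at hascn
      rcases Nat.lt_or_ge (l.getLast?.getD 0) R with hc | hc
      · rw [if_pos hc] at hascn
        exact ⟨l, Or.inr ⟨⟨hlen', hascl, havdl, by omega⟩, hmaxl, hc⟩, hxeq.symm⟩
      · rw [if_neg (by omega)] at hascn
        have hld : l.getLast?.getD 0 ≤ l.foldr max 0 := lastD_le_max l hlne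
        have he : l.getLast?.getD 0 = R := by omega
        have hmaxe : l.foldr max 0 = R := by omega
        refine ⟨l, Or.inl ⟨⟨hlen', hascl, havdl, by omega⟩, hmaxe, ?_⟩, hxeq.symm⟩
        rw [getLast?_eq_getD l hlne, he]
    · rintro ⟨l, hl, rfl⟩
      have hlne : l ≠ [] := by
        rcases hl with ⟨⟨hlen, -⟩, -⟩ | ⟨⟨hlen, -⟩, -⟩ <;>
          (rintro rfl; simp at hlen; omega)
      rcases hl with ⟨⟨hlen, hascl, havdl, hascn⟩, hmaxl, hlastl⟩ |
        ⟨⟨hlen, hascl, havdl, hascn⟩, hmaxl, hlastl⟩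
      · -- S case : last letter R, ascents M
        have hbound : ∀ y ∈ l, y ≤ R := fun y hy => hmaxl ▸ le_foldr_max l y hy
        have hldR : l.getLast?.getD 0 = R := by rw [hlastl]; rfl
        refine ⟨⟨by simp [hlen], ?_, ?_, ?_⟩, ?_, ?_⟩
        · exact (isAscentSeq_concat l hlne R).mpr ⟨hascl, by omega⟩
        · exact (avoids_concat_max l R hbound).mpr havdl
        · rw [ascents_concat l hlne R, hldR, if_neg (lt_irrefl R)]; omega
        · rw [foldr_max_concat, hmaxl]; simp
        · exact List.getLast?_concat
      · -- D case : last letter < R, ascents M-1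
        have hbound : ∀ y ∈ l, y ≤ R := fun y hy => le_trans (le_foldr_max l y hy) hmaxl
        refine ⟨⟨by simp [hlen], ?_, ?_, ?_⟩, ?_, ?_⟩
        · exact (isAscentSeq_concat l hlne R).mpr ⟨hascl, by omega⟩
        · exact (avoids_concat_max l R hbound).mpr havdl
        · rw [ascents_concat l hlne R, if_pos hlastl]; omega
        · rw [foldr_max_concat]; omega
        · exact List.getLast?_concat
  have hinj : Set.InjOn (fun l : List ℕ => l ++ [R]) (S ∪ D) := by
    intro a _ b _ hab
    have := congrArg List.dropLast hab
    simpa [List.dropLast_concat] using this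
  have hdisj : Disjoint S D := by
    rw [Set.disjoint_left]
    rintro x ⟨⟨-, -, -, h1⟩, -⟩ ⟨⟨-, -, -, h2⟩, -⟩
    omega
  have fS : S.Finite := by
    apply (AS_finite n M R (fun x => x.getLast? = some R)).subset
    rintro x ⟨h1, h2, h3⟩; exact ⟨h1, le_of_eq h2, h3⟩
  have fD : D.Finite := AS_finite n (M-1) R _
  rw [cA_eq, himg, Set.ncard_image_of_injOn hinj, Set.ncard_union_eq hdisj fS fD, cA_eq]

lemma cA_len_zero (m r s : ℕ) : cA 0 m r s = 0 := by
  unfold cA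
  rw [show {x : List ℕ | x.length = 0 ∧ IsAscentSeq x ∧ Avoids x [2, 1, 0] ∧
      ascents x = m ∧ x.foldr max 0 = r ∧ x.getLast? = some s} = ∅ from ?_,
    Set.ncard_empty]
  ext x
  simp only [Set.mem_setOf_eq, Set.mem_empty_iff_false, iff_false]
  rintro ⟨hlen, -, -, -, -, hlast⟩
  rw [List.length_eq_zero_iff.mp hlen] at hlast
  simp at hlast

lemma cA_len_one (m r s : ℕ) (hm : 1 ≤ m) : cA 1 m r s = 0 := by
  unfold cA
  rw [show {x : List ℕ | x.length = 1 ∧ IsAscentSeq x ∧ Avoids x [2, 1, 0] ∧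
      ascents x = m ∧ x.foldr max 0 = r ∧ x.getLast? = some s} = ∅ from ?_,
    Set.ncard_empty]
  ext x
  simp only [Set.mem_setOf_eq, Set.mem_empty_iff_false, iff_false]
  rintro ⟨hlen, -, -, hasc, -, -⟩
  obtain ⟨a, rfl⟩ := List.length_eq_one_iff.mp hlen
  simp [ascents_single] at hasc
  omega

lemma ascents_all_zero (l : List ℕ) (h : ∀ y ∈ l, y = 0) : ascents l = 0 := by
  unfold ascents
  rw [List.length_eq_zero_iff]
  rw [List.filter_eq_nil_iff]
  rintro ⟨a, b⟩ hab
  obtain ⟨ha, hb⟩ := List.of_mem_zip hab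
  have := h a ha
  have := h b (List.mem_of_mem_tail hb)
  simp_all

lemma cA_zero000 (n : ℕ) (hn : 1 ≤ n) : cA n 0 0 0 = 1 := by
  unfold cA
  rw [show {x : List ℕ | x.length = n ∧ IsAscentSeq x ∧ Avoids x [2, 1, 0] ∧
      ascents x = 0 ∧ x.foldr max 0 = 0 ∧ x.getLast? = some 0}
      = {List.replicate n 0} from ?_, Set.ncard_singleton]
  ext x
  simp only [Set.mem_setOf_eq, Set.mem_singleton_iff]
  constructor
  · rintro ⟨hlen, -, -, -, hmax, -⟩
    apply List.eq_replicate_iff.mpr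
    refine ⟨hlen, fun y hy => ?_⟩
    have := le_foldr_max x y hy
    omega
  · rintro rfl
    have hmem : ∀ y ∈ List.replicate n 0, y = 0 := fun y hy => List.eq_of_mem_replicate hy
    have hne : List.replicate n 0 ≠ [] := by
      simp [List.replicate_eq_nil_iff]; omega
    refine ⟨by simp, ⟨fun h => ?_, fun i hi => ?_⟩, ?_, ascents_all_zero _ hmem,
      foldr_max_replicate n, ?_⟩
    · exact hmem _ (List.get_mem _ _)
    · simp [List.getElem_replicate]
    · intro hcon
      rw [contains_210_iff] at hcon
      obtain ⟨i, j, k, -, -, h1, -⟩ := hcon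
      simp [List.getElem_replicate] at h1
    · rw [List.getLast?_eq_getLast hne]
      rw [hmem _ (List.getLast_mem hne)]

lemma cA_rec (n M R : ℕ) (hn : 1 ≤ n) (hM : 1 ≤ M) (hR1 : 1 ≤ R) (hRM : R ≤ M) :
    cA (n+1) M R R + cA n (M-1) R R
      = cA n M R R + ∑ j ∈ Finset.range (R+1), ∑ i ∈ Finset.range (j+1), cA n (M-1) j i := by
  rw [key1 n M R hn hM hR1 hRM, key2 n (M-1) R hn]
  ring

lemma sum_Icc_int {α : Type*} [AddCommMonoid α] (R : ℕ) (g : ℤ → α) :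
    ∑ j ∈ Finset.Icc (0:ℤ) (R:ℤ), g j = ∑ j ∈ Finset.range (R+1), g (j:ℤ) := by
  induction R with
  | zero => simp
  | succ R ih =>
    rw [Finset.sum_range_succ, ← ih]
    push_cast
    rw [show Finset.Icc (0:ℤ) ((R:ℤ)+1) = insert ((R:ℤ)+1) (Finset.Icc 0 (R:ℤ)) from by
      ext a; simp; omega]
    rw [Finset.sum_insert (by simp)]
    exact add_comm _ _


/-- The initial condition `f_{0,0,0} = x/(1-x)` and the recurrence
`f_{m,r,r} = (x/(1-x)) (Σ_{j=0}^{r} Σ_{i=0}^{j} f_{m-1,j,i} - f_{m-1,r,r})`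
for `1 ≤ r ≤ m`, multiplied through by `(1-x)`. -/
theorem fGF_diagonal_recurrence :
    (1 - X) * fGF 0 0 0 = X ∧
    ∀ m r : ℤ, 1 ≤ m → 1 ≤ r → r ≤ m →
      (1 - X) * fGF m r r
        = X * (∑ j ∈ Finset.Icc 0 r, ∑ i ∈ Finset.Icc 0 j, fGF (m - 1) j i)
          - X * fGF (m - 1) r r := by
  constructor
  · rw [sub_mul, one_mul]
    ext k
    rw [map_sub]
    cases k with
    | zero =>
      simp [fGF, PowerSeries.coeff_mk, cA_len_zero]
    | succ k =>
      rw [PowerSeries.coeff_succ_X_mul, PowerSeries.coeff_X]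
      simp only [fGF, if_pos (by norm_num : (0:ℤ) ≤ 0 ∧ (0:ℤ) ≤ 0 ∧ (0:ℤ) ≤ 0),
        PowerSeries.coeff_mk, Int.toNat_zero]
      cases k with
      | zero => simp [cA_len_zero, cA_zero000 1 (by norm_num)]
      | succ k =>
        rw [cA_zero000 (k+1+1) (by omega), cA_zero000 (k+1) (by omega)]
        simp
  · intro m r hm hr hrm
    obtain ⟨M, rfl⟩ : ∃ M : ℕ, m = (M:ℤ) := ⟨m.toNat, by omega⟩
    obtain ⟨R, rfl⟩ : ∃ R : ℕ, r = (R:ℤ) := ⟨r.toNat, by omega⟩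
    have hM1 : 1 ≤ M := by omega
    have hR1 : 1 ≤ R := by omega
    have hRM : R ≤ M := by omega
    have hfm : fGF (M:ℤ) (R:ℤ) (R:ℤ) = PowerSeries.mk (fun n => (cA n M R R : ℚ)) := by
      unfold fGF
      rw [if_pos ⟨by omega, by omega, by omega⟩, Int.toNat_natCast, Int.toNat_natCast]
    have hfm' : ∀ j i : ℕ, fGF ((M:ℤ)-1) (j:ℤ) (i:ℤ)
        = PowerSeries.mk (fun n => (cA n (M-1) j i : ℚ)) := by
      intro j i
      unfold fGF
      rw [if_pos ⟨by omega, by omega, by omega⟩,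
        show ((M:ℤ)-1).toNat = M - 1 from by omega, Int.toNat_natCast, Int.toNat_natCast]
    rw [sum_Icc_int R (fun j => ∑ i ∈ Finset.Icc 0 j, fGF ((M:ℤ)-1) j i)]
    have hsum : ∀ j : ℕ, ∑ i ∈ Finset.Icc (0:ℤ) (j:ℤ), fGF ((M:ℤ)-1) (j:ℤ) i
        = ∑ i ∈ Finset.range (j+1), PowerSeries.mk (fun n => (cA n (M-1) j i : ℚ)) := by
      intro j
      rw [sum_Icc_int j (fun i => fGF ((M:ℤ)-1) (j:ℤ) i)]
      exact Finset.sum_congr rfl (fun i _ => hfm' j i)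
    rw [Finset.sum_congr rfl (fun j _ => hsum j), hfm, hfm' R R]
    ext k
    rw [map_sub, sub_mul, one_mul, map_sub]
    cases k with
    | zero =>
      simp [PowerSeries.coeff_zero_eq_constantCoeff, map_mul, cA_len_zero]
    | succ k =>
      rw [PowerSeries.coeff_succ_X_mul, PowerSeries.coeff_succ_X_mul,
        PowerSeries.coeff_succ_X_mul, PowerSeries.coeff_mk, PowerSeries.coeff_mk,
        PowerSeries.coeff_mk]
      rw [map_sum]
      simp only [map_sum, PowerSeries.coeff_mk]
      cases k with
      | zero =>
        simp [cA_len_zero, cA_len_one _ _ _ hM1]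
      | succ k =>
        have := cA_rec (k+1) M R (by omega) hM1 hR1 hRM
        have hcast : ((cA (k+1+1) M R R : ℚ) + (cA (k+1) (M-1) R R : ℚ))
            = (cA (k+1) M R R : ℚ)
              + ∑ j ∈ Finset.range (R+1), ∑ i ∈ Finset.range (j+1), (cA (k+1) (M-1) j i : ℚ) := by
          exact_mod_cast congrArg (fun t : ℕ => (t : ℚ)) this
        linarith [hcast]
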